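/- arXiv:2201.13329 — 3 statements merged into one kernel-verified Lean document; each statement's English description precedes it below -/
import Mathlib

section
/- Consider the Gaussian mixture data model where y is uniform on {-1,+1}, x_1 ~ N(y, σ²), and x_2,...,x_{d+1} are i.i.d. N(ηy, σ²) with 0 < η. Let the robust classifier be f_rob(x) = sign(x_1). Under ℓ∞ perturbations of magnitude ε = 2η, the adversarial accuracy of f_rob equals Pr[N(0,1) < (1 - 2η)/σ]. -/
open MeasureTheory ProbabilityTheory ENNReal

/-- The Gaussian mixture distribution over (ℝ^{d+1}) × {±1}: labels ±1 with probability 1/2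
each; given y, the coordinates are independent with x_i ~ N(μ_i y, σ²). -/
noncomputable def gmix (d : ℕ) (μ : Fin (d + 1) → ℝ) (σ : ℝ) :
    Measure ((Fin (d + 1) → ℝ) × ℝ) :=
  (1 / 2 : ℝ≥0∞) • Measure.map (fun x => (x, (1 : ℝ)))
      (Measure.pi fun i => gaussianReal (μ i) (σ ^ 2).toNNReal)
  + (1 / 2 : ℝ≥0∞) • Measure.map (fun x => (x, (-1 : ℝ)))
      (Measure.pi fun i => gaussianReal (-μ i) (σ ^ 2).toNNReal)

/-- Adversarial accuracy of a classifier f under ℓ∞ perturbations of magnitude ε. -/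
noncomputable def advAcc (d : ℕ) (D : Measure ((Fin (d + 1) → ℝ) × ℝ))
    (f : (Fin (d + 1) → ℝ) → ℝ) (ε : ℝ) : ℝ≥0∞ :=
  D {p | ∀ δ : Fin (d + 1) → ℝ, (∀ i, |δ i| ≤ ε) → f (p.1 + δ) = p.2}

lemma pi_eval_zero {d : ℕ} (μ : Fin (d+1) → Measure ℝ) [∀ i, IsProbabilityMeasure (μ i)]
    (s : Set ℝ) (hs : MeasurableSet s) :
    Measure.pi μ (Function.eval 0 ⁻¹' s) = μ 0 s := by
  have h : Function.eval 0 ⁻¹' s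
      = Set.pi Set.univ (fun i : Fin (d+1) => if i = 0 then s else Set.univ) := by
    ext x
    simp only [Set.mem_preimage, Set.mem_pi, Set.mem_univ, forall_true_left]
    constructor
    · intro hx i; by_cases hi : i = 0 <;> simp [hi, hx, Function.eval]
    · intro hx; have := hx 0; simpa [Function.eval] using this
  rw [h, Measure.pi_pi]
  rw [Finset.prod_eq_single 0]
  · simp
  · intro i _ hi; simp [hi]
  · simp

lemma g_pos (σ η : ℝ) (hσ : 0 < σ) :
    gaussianReal 1 (σ^2).toNNReal (Set.Ioi (2*η))
      = gaussianReal 0 1 (Set.Iio ((1-2*η)/σ)) := by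
  have hvar : (NNReal.mk (σ^2) (sq_nonneg σ)) * 1 = (σ^2).toNNReal := by
    apply NNReal.coe_injective
    simp [Real.coe_toNNReal _ (sq_nonneg σ)]
  have h1 : gaussianReal 1 (σ^2).toNNReal
      = Measure.map (· + 1) (Measure.map (σ * ·) (gaussianReal 0 1)) := by
    rw [gaussianReal_map_const_mul σ, mul_zero, hvar, gaussianReal_map_add_const, zero_add]
  have hsym : gaussianReal (0:ℝ) 1 = Measure.map (fun x => -1 * x) (gaussianReal 0 1) := by
    rw [gaussianReal_map_const_mul (-1)]
    norm_num
  rw [h1, Measure.map_apply (measurable_add_const 1) measurableSet_Ioi,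
    Measure.map_apply (measurable_const_mul σ) ((measurableSet_Ioi).preimage (measurable_add_const 1))]
  have hpre : (σ * ·) ⁻¹' ((· + 1) ⁻¹' Set.Ioi (2*η)) = Set.Ioi ((2*η - 1)/σ) := by
    ext x
    simp only [Set.mem_preimage, Set.mem_Ioi]
    rw [div_lt_iff₀ hσ]
    constructor
    · intro h; nlinarith
    · intro h; nlinarith
  rw [hpre]
  conv_lhs => rw [hsym]
  rw [Measure.map_apply (measurable_const_mul (-1)) measurableSet_Ioi]
  congr 1
  ext x
  simp only [Set.mem_preimage, Set.mem_Ioi, Set.mem_Iio]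
  constructor
  · intro h; rw [div_lt_iff₀ hσ] at h; rw [lt_div_iff₀ hσ]; nlinarith
  · intro h; rw [lt_div_iff₀ hσ] at h; rw [div_lt_iff₀ hσ]; nlinarith

lemma g_neg (σ η : ℝ) (hσ : 0 < σ) (hη : 0 < η) :
    gaussianReal (-1) (σ^2).toNNReal (Set.Iic (-(2*η)))
      = gaussianReal 0 1 (Set.Iio ((1-2*η)/σ)) := by
  have hv : (σ^2).toNNReal ≠ 0 := by
    simp only [ne_eq, Real.toNNReal_eq_zero, not_le]
    positivity
  have hvar : (NNReal.mk ((-1:ℝ)^2) (sq_nonneg (-1:ℝ))) = 1 := by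
    apply NNReal.coe_injective; norm_num
  have h1 : gaussianReal (-1) (σ^2).toNNReal
      = Measure.map (fun x => -1 * x) (gaussianReal 1 (σ^2).toNNReal) := by
    rw [gaussianReal_map_const_mul (-1), hvar, one_mul]; norm_num
  rw [h1, Measure.map_apply (measurable_const_mul (-1)) measurableSet_Iic]
  have hpre : (fun x => -1 * x) ⁻¹' Set.Iic (-(2*η)) = Set.Ici (2*η) := by
    ext x; simp only [Set.mem_preimage, Set.mem_Iic, Set.mem_Ici]; constructor <;> intro h <;> linarith
  rw [hpre]
  have hsing : gaussianReal 1 (σ^2).toNNReal {(2*η)} = 0 :=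
    gaussianReal_absolutelyContinuous 1 hv (measure_singleton _)
  have : Set.Ici (2*η) = Set.Ioi (2*η) ∪ {2*η} := by
    rw [Set.Ioi_union_left]
  have heq : gaussianReal 1 (σ^2).toNNReal (Set.Ioi (2*η) ∪ {2*η})
      = gaussianReal 1 (σ^2).toNNReal (Set.Ioi (2*η)) := by
    refine le_antisymm ?_ (measure_mono Set.subset_union_left)
    exact (measure_union_le _ _).trans (by rw [hsing, add_zero])
  rw [this, heq, g_pos σ η hσ]

/-- In the Gaussian mixture model (x_1 ~ N(y,σ²), x_i ~ N(ηy,σ²) for i ≥ 2), the adversarial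
accuracy of the robust classifier f_rob(x) = sign(x_1) under ℓ∞ budget ε = 2η equals
Pr[N(0,1) < (1 - 2η)/σ]. -/
theorem advAcc_robust_classifier (d : ℕ) (η σ : ℝ) (hη : 0 < η) (hσ : 0 < σ) :
    advAcc d (gmix d (fun i => if i = 0 then 1 else η) σ)
        (fun x => if 0 < x 0 then (1 : ℝ) else -1) (2 * η)
      = gaussianReal 0 1 {t : ℝ | t < (1 - 2 * η) / σ} := by
  have hS : {p : (Fin (d+1) → ℝ) × ℝ | ∀ δ : Fin (d+1) → ℝ, (∀ i, |δ i| ≤ 2*η) →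
        (fun x => if 0 < x 0 then (1:ℝ) else -1) (p.1 + δ) = p.2}
      = {p : (Fin (d+1) → ℝ) × ℝ | (2*η < p.1 0 ∧ p.2 = 1) ∨ (p.1 0 ≤ -(2*η) ∧ p.2 = -1)} := by
    ext p
    simp only [Set.mem_setOf_eq, Pi.add_apply]
    constructor
    · intro h
      have h1 := h (fun _ => -(2*η))
        (fun i => by show |(-(2*η))| ≤ 2*η; rw [abs_neg, abs_of_nonneg (by linarith)])
      have h2 := h (fun _ => 2*η)
        (fun i => by show |(2*η)| ≤ 2*η; rw [abs_of_nonneg (by linarith)])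
      by_cases hc : 0 < p.1 0 + -(2*η)
      · rw [if_pos hc] at h1
        exact Or.inl ⟨by linarith, h1.symm⟩
      · rw [if_neg hc] at h1
        by_cases hc2 : 0 < p.1 0 + 2*η
        · rw [if_pos hc2] at h2
          rw [← h1] at h2; norm_num at h2
        · exact Or.inr ⟨by linarith, h1.symm⟩
    · rintro (⟨hx, hy⟩ | ⟨hx, hy⟩) δ hδ
      · have h0 := (abs_le.mp (hδ 0)).1
        have hpos : 0 < p.1 0 + δ 0 := by linarith
        simp [hpos, hy]
      · have h0 := (abs_le.mp (hδ 0)).2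
        have hneg : ¬ 0 < p.1 0 + δ 0 := by push_neg; linarith
        simp [hneg, hy]
  have hmS : MeasurableSet {p : (Fin (d+1) → ℝ) × ℝ |
      (2*η < p.1 0 ∧ p.2 = 1) ∨ (p.1 0 ≤ -(2*η) ∧ p.2 = -1)} := by
    apply MeasurableSet.union
    · exact (measurableSet_lt measurable_const ((measurable_pi_apply 0).comp measurable_fst)).inter
        (measurable_snd (measurableSet_singleton 1))
    · exact (measurableSet_le ((measurable_pi_apply 0).comp measurable_fst) measurable_const).inter
        (measurable_snd (measurableSet_singleton (-1)))
  rw [advAcc, hS, gmix]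
  rw [Measure.add_apply, Measure.smul_apply, Measure.smul_apply,
    Measure.map_apply measurable_prodMk_right hmS,
    Measure.map_apply measurable_prodMk_right hmS]
  have hpre1 : (fun x : Fin (d+1) → ℝ => (x, (1:ℝ))) ⁻¹'
      {p : (Fin (d+1) → ℝ) × ℝ | (2*η < p.1 0 ∧ p.2 = 1) ∨ (p.1 0 ≤ -(2*η) ∧ p.2 = -1)}
      = Function.eval 0 ⁻¹' Set.Ioi (2*η) := by
    ext x
    simp only [Set.mem_preimage, Set.mem_setOf_eq, Set.mem_Ioi, Function.eval]
    norm_num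
  have hpre2 : (fun x : Fin (d+1) → ℝ => (x, (-1:ℝ))) ⁻¹'
      {p : (Fin (d+1) → ℝ) × ℝ | (2*η < p.1 0 ∧ p.2 = 1) ∨ (p.1 0 ≤ -(2*η) ∧ p.2 = -1)}
      = Function.eval 0 ⁻¹' Set.Iic (-(2*η)) := by
    ext x
    simp only [Set.mem_preimage, Set.mem_setOf_eq, Set.mem_Iic, Function.eval]
    norm_num
  rw [hpre1, hpre2, pi_eval_zero _ _ measurableSet_Ioi, pi_eval_zero _ _ measurableSet_Iic]
  simp only [if_pos rfl, if_true]
  rw [g_pos σ η hσ, g_neg σ η hσ hη]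
  have : {t : ℝ | t < (1 - 2*η) / σ} = Set.Iio ((1 - 2*η) / σ) := rfl
  rw [this, smul_eq_mul, ← add_mul, ENNReal.add_halves, one_mul]
end

section
/- Consider the Gaussian mixture data model where y is uniform on {-1,+1}, x_1 ~ N(y, σ²), and x_2,...,x_{d+1} are i.i.d. N(ηy, σ²). Let f_nat(x) = sign(w_nat · x) with w_nat = (1, η, ..., η). Under ℓ∞ perturbations of magnitude ε = 2η, the adversarial accuracy of f_nat is at most Pr[N(0,1) < (1 - dη²)/(σ√(1 + dη²))]. In particular, if d ≥ 1/η², the adversarial accuracy of f_nat is less than 1/2. -/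
open MeasureTheory ProbabilityTheory ENNReal

open NNReal Real

lemma pdf_conv (m₁ m₂ : ℝ) {v₁ v₂ : ℝ≥0} (h₁ : v₁ ≠ 0) (h₂ : v₂ ≠ 0) (z x : ℝ) :
    gaussianPDFReal m₁ v₁ x * gaussianPDFReal m₂ v₂ (z - x)
      = gaussianPDFReal (m₁ + m₂) (v₁ + v₂) z
        * gaussianPDFReal (m₁ + (v₁ / (v₁ + v₂) : ℝ≥0) * (z - m₁ - m₂))
          (v₁ * v₂ / (v₁ + v₂)) x := by
  have hv₁ : (0:ℝ) < v₁ := lt_of_le_of_ne v₁.coe_nonneg (by exact_mod_cast h₁.symm)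
  have hv₂ : (0:ℝ) < v₂ := lt_of_le_of_ne v₂.coe_nonneg (by exact_mod_cast h₂.symm)
  have hs : (0:ℝ) < (v₁:ℝ) + v₂ := by linarith
  simp only [gaussianPDFReal]
  have hc1 : ((v₁ * v₂ / (v₁ + v₂) : ℝ≥0) : ℝ) = (v₁:ℝ) * v₂ / ((v₁:ℝ) + v₂) := by
    push_cast [NNReal.coe_div]
    ring
  have hc2 : ((v₁ / (v₁ + v₂) : ℝ≥0) : ℝ) = (v₁:ℝ) / ((v₁:ℝ) + v₂) := by
    push_cast [NNReal.coe_div]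
    ring
  rw [hc1, hc2]
  push_cast
  rw [mul_mul_mul_comm]
  conv_rhs => rw [mul_mul_mul_comm]
  congr 1
  · rw [← Real.sqrt_inv, ← Real.sqrt_inv, ← Real.sqrt_inv, ← Real.sqrt_inv,
      ← Real.sqrt_mul (by positivity), ← Real.sqrt_mul (by positivity)]
    congr 1
    push_cast
    field_simp
  · rw [← Real.exp_add, ← Real.exp_add]
    congr 1
    push_cast
    field_simp
    ring

lemma measurable_pdf2 (m₂ : ℝ) (v₂ : ℝ≥0) :
    Measurable (fun p : ℝ × ℝ => gaussianPDF (m₂ + p.1) v₂ p.2) := by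
  simp only [gaussianPDF, gaussianPDFReal]
  apply Measurable.ennreal_ofReal
  fun_prop

lemma gaussian_conv (m₁ m₂ : ℝ) (v₁ v₂ : ℝ≥0) :
    Measure.map (fun p : ℝ × ℝ => p.1 + p.2)
        ((gaussianReal m₁ v₁).prod (gaussianReal m₂ v₂))
      = gaussianReal (m₁ + m₂) (v₁ + v₂) := by
  by_cases h₁ : v₁ = 0
  · subst h₁
    rw [gaussianReal_zero_var, Measure.dirac_prod, zero_add,
      Measure.map_map measurable_add (measurable_prodMk_left)]
    simpa [Function.comp_def, add_comm m₂ m₁] using gaussianReal_map_const_add (μ := m₂) (v := v₂) m₁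
  by_cases h₂ : v₂ = 0
  · subst h₂
    rw [gaussianReal_zero_var, Measure.prod_dirac, add_zero,
      Measure.map_map measurable_add (measurable_prodMk_right)]
    simpa [Function.comp_def] using gaussianReal_map_add_const (μ := m₁) (v := v₁) m₂
  have hsum : v₁ + v₂ ≠ 0 := by simp [add_eq_zero, h₁, h₂]
  have hstar : v₁ * v₂ / (v₁ + v₂) ≠ 0 := by
    rw [div_ne_zero_iff]
    exact ⟨mul_ne_zero h₁ h₂, hsum⟩
  ext s hs
  rw [Measure.map_apply measurable_add hs,
    Measure.prod_apply (measurable_add hs)]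
  have hpre : ∀ x : ℝ, (Prod.mk x ⁻¹' ((fun p : ℝ × ℝ => p.1 + p.2) ⁻¹' s))
      = (fun y => x + y) ⁻¹' s := fun x => rfl
  simp_rw [hpre]
  have hmap : ∀ x : ℝ, gaussianReal m₂ v₂ ((fun y => x + y) ⁻¹' s)
      = ∫⁻ z in s, gaussianPDF (m₂ + x) v₂ z := by
    intro x
    rw [← Measure.map_apply (measurable_const_add x) hs, gaussianReal_map_const_add,
      gaussianReal_apply _ (by simpa using h₂)]
  simp_rw [hmap]
  rw [gaussianReal_of_var_ne_zero _ h₁,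
    lintegral_withDensity_eq_lintegral_mul _ (measurable_gaussianPDF _ _)
      (by exact Measurable.lintegral_prod_right (by exact (measurable_pdf2 m₂ v₂)))]
  have key : ∀ z, (∫⁻ x, gaussianPDF m₁ v₁ x * gaussianPDF (m₂ + x) v₂ z)
      = ENNReal.ofReal (gaussianPDFReal (m₁ + m₂) (v₁ + v₂) z) := by
    intro z
    have hpt : ∀ x, gaussianPDF m₁ v₁ x * gaussianPDF (m₂ + x) v₂ z
        = ENNReal.ofReal (gaussianPDFReal (m₁ + m₂) (v₁ + v₂) z)
          * gaussianPDF (m₁ + (v₁ / (v₁ + v₂) : ℝ≥0) * (z - m₁ - m₂))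
            (v₁ * v₂ / (v₁ + v₂)) x := by
      intro x
      simp only [gaussianPDF]
      rw [← ENNReal.ofReal_mul (gaussianPDFReal_nonneg _ _ _),
        ← ENNReal.ofReal_mul (gaussianPDFReal_nonneg _ _ _)]
      congr 1
      rw [← gaussianPDFReal_sub z x]
      exact pdf_conv m₁ m₂ h₁ h₂ z x
    simp_rw [hpt]
    rw [lintegral_const_mul _ (measurable_gaussianPDF _ _),
      lintegral_gaussianPDF_eq_one _ hstar, mul_one]
  calc (∫⁻ x, gaussianPDF m₁ v₁ x * ∫⁻ z in s, gaussianPDF (m₂ + x) v₂ z)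
      = ∫⁻ x, ∫⁻ z in s, gaussianPDF m₁ v₁ x * gaussianPDF (m₂ + x) v₂ z :=
        lintegral_congr fun x => (lintegral_const_mul _ (measurable_gaussianPDF _ _)).symm
    _ = ∫⁻ z in s, ∫⁻ x, gaussianPDF m₁ v₁ x * gaussianPDF (m₂ + x) v₂ z := by
        refine lintegral_lintegral_swap ?_
        exact (((measurable_gaussianPDF m₁ v₁).comp measurable_fst).mul
          (measurable_pdf2 m₂ v₂)).aemeasurable
    _ = ∫⁻ z in s, ENNReal.ofReal (gaussianPDFReal (m₁ + m₂) (v₁ + v₂) z) :=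
        lintegral_congr fun z => key z
    _ = gaussianReal (m₁ + m₂) (v₁ + v₂) s := (gaussianReal_apply _ hsum s).symm

lemma map_weighted_sum_pi : ∀ (n : ℕ) (w m : Fin n → ℝ) (v : Fin n → ℝ≥0),
    Measure.map (fun x : Fin n → ℝ => ∑ i, w i * x i)
        (Measure.pi fun i => gaussianReal (m i) (v i))
      = gaussianReal (∑ i, w i * m i) (∑ i, ⟨(w i) ^ 2, sq_nonneg _⟩ * v i) := by
  intro n
  induction n with
  | zero =>
      intro w m v
      simp only [Finset.univ_eq_empty, Finset.sum_empty]
      rw [Measure.map_const, measure_univ, one_smul, gaussianReal_zero_var]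
  | succ n ih =>
      intro w m v
      have hmp := measurePreserving_piFinSuccAbove (fun i => gaussianReal (m i) (v i)) 0
      have hcomp : (fun x : Fin (n + 1) → ℝ => ∑ i, w i * x i)
          = (fun p : ℝ × (Fin n → ℝ) => w 0 * p.1 + ∑ j, w j.succ * p.2 j)
            ∘ (MeasurableEquiv.piFinSuccAbove (fun _ => ℝ) 0) := by
        ext x
        simp only [Function.comp_apply, MeasurableEquiv.piFinSuccAbove,
          MeasurableEquiv.coe_mk, Equiv.coe_fn_symm_mk]
        rw [Fin.sum_univ_succ]
        simp [Fin.succAbove, Fin.insertNthEquiv, Fin.tail]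
      rw [hcomp, ← Measure.map_map (by fun_prop) (MeasurableEquiv.measurable _),
        hmp.map_eq]
      have hsplit : (fun p : ℝ × (Fin n → ℝ) => w 0 * p.1 + ∑ j, w j.succ * p.2 j)
          = (fun q : ℝ × ℝ => q.1 + q.2)
            ∘ (Prod.map (fun t : ℝ => w 0 * t) (fun y : Fin n → ℝ => ∑ j, w j.succ * y j)) := rfl
      rw [hsplit, ← Measure.map_map measurable_add (by fun_prop),
        ← Measure.map_prod_map _ _ (by fun_prop) (by fun_prop)]
      have h0 : ∀ j : Fin (n+1), (0 : Fin (n+1)).succAbove = Fin.succ := by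
        intro _; ext j; simp [Fin.succAbove]
      rw [h0 0]
      rw [show (fun t : ℝ => w 0 * t) = (w 0 * ·) from rfl, gaussianReal_map_const_mul,
        ih (fun j => w j.succ) (fun j => m j.succ) (fun j => v j.succ),
        gaussian_conv, Fin.sum_univ_succ, Fin.sum_univ_succ]
      rfl

lemma gaussianReal_map_neg : Measure.map (fun x : ℝ => -x) (gaussianReal 0 1) = gaussianReal 0 1 := by
  have h : (fun x : ℝ => -x) = ((-1 : ℝ) * ·) := by funext x; ring
  rw [h, gaussianReal_map_const_mul]
  norm_num

lemma gaussianReal_affine (m : ℝ) {v : ℝ≥0} (hv : v ≠ 0) {s : Set ℝ} (hs : MeasurableSet s) :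
    gaussianReal m v s = gaussianReal 0 1 ((fun z => Real.sqrt v * z + m) ⁻¹' s) := by
  have h1 : Measure.map ((√(v : ℝ)) * ·) (gaussianReal 0 1) = gaussianReal 0 v := by
    rw [gaussianReal_map_const_mul, mul_zero]
    congr 1
    ext
    push_cast
    rw [Real.sq_sqrt v.coe_nonneg]
    simp
  have h2 : Measure.map (· + m) (gaussianReal 0 v) = gaussianReal m v := by
    rw [gaussianReal_map_add_const, zero_add]
  rw [← h2, ← h1, Measure.map_map (by fun_prop) (by fun_prop),
    Measure.map_apply (by fun_prop) hs]
  rfl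

lemma gaussianReal_Iic (m a : ℝ) {v : ℝ≥0} (hv : v ≠ 0) (hv' : (0:ℝ) < v) :
    gaussianReal m v (Set.Iic a) = gaussianReal 0 1 (Set.Iic ((a - m) / Real.sqrt v)) := by
  rw [gaussianReal_affine m hv measurableSet_Iic]
  congr 1
  ext z
  have hsv : (0:ℝ) < Real.sqrt v := Real.sqrt_pos.mpr hv'
  simp only [Set.mem_preimage, Set.mem_Iic]
  rw [le_div_iff₀ hsv]
  constructor <;> intro h <;> nlinarith

lemma gaussianReal_Ioi (m a : ℝ) {v : ℝ≥0} (hv : v ≠ 0) (hv' : (0:ℝ) < v) :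
    gaussianReal m v (Set.Ioi a) = gaussianReal 0 1 (Set.Iio ((m - a) / Real.sqrt v)) := by
  rw [gaussianReal_affine m hv measurableSet_Ioi]
  have hmap := _root_.gaussianReal_map_neg
  have : gaussianReal 0 1 (Set.Iio ((m - a) / Real.sqrt v))
      = gaussianReal 0 1 ((fun x : ℝ => -x) ⁻¹' Set.Iio ((m - a) / Real.sqrt v)) := by
    conv_lhs => rw [← hmap]
    rw [Measure.map_apply (by fun_prop) measurableSet_Iio]
  rw [this]
  congr 1
  ext z
  have hsv : (0:ℝ) < Real.sqrt v := Real.sqrt_pos.mpr hv'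
  simp only [Set.mem_preimage, Set.mem_Ioi, Set.mem_Iio]
  rw [lt_div_iff₀ hsv]
  constructor <;> intro h <;> nlinarith

lemma gaussianReal_Iic_zero : gaussianReal 0 1 (Set.Iic (0:ℝ)) = 1/2 := by
  have h0 : gaussianReal 0 1 {(0:ℝ)} = 0 :=
    gaussianReal_absolutelyContinuous 0 one_ne_zero (volume_singleton)
  have hsym : gaussianReal 0 1 (Set.Iic (0:ℝ)) = gaussianReal 0 1 (Set.Ici (0:ℝ)) := by
    conv_rhs => rw [← _root_.gaussianReal_map_neg, Measure.map_apply (by fun_prop) measurableSet_Ici]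
    congr 1
    ext z
    simp
  have hIci : gaussianReal 0 1 (Set.Ici (0:ℝ)) = gaussianReal 0 1 (Set.Ioi (0:ℝ)) := by
    rw [← Set.Ioi_union_left, measure_union (by simp) (measurableSet_singleton _), h0, add_zero]
  have htot : gaussianReal 0 1 (Set.Iic (0:ℝ)) + gaussianReal 0 1 (Set.Ioi (0:ℝ)) = 1 := by
    rw [← measure_union (by simp [Set.disjoint_left]) measurableSet_Ioi]
    simp
  rw [hsym, hIci] at htot ⊢
  rw [ENNReal.eq_div_iff two_ne_zero ofNat_ne_top, two_mul, htot]

/-- In the Gaussian mixture model, under ℓ∞ budget ε = 2η, the adversarial accuracy of the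
natural classifier f_nat(x) = sign(x_1 + η ∑_{i≥2} x_i) is at most
Pr[N(0,1) < (1 - dη²)/(σ√(1 + dη²))]; in particular it is below 1/2 when d ≥ 1/η². -/
theorem advAcc_natural_classifier_le (d : ℕ) (η σ : ℝ) (hη : 0 < η) (hσ : 0 < σ) :
    advAcc d (gmix d (fun i => if i = 0 then 1 else η) σ)
        (fun x => if 0 < ∑ i, (if i = 0 then 1 else η) * x i then (1 : ℝ) else -1) (2 * η)
      ≤ gaussianReal 0 1
          {t : ℝ | t < (1 - d * η ^ 2) / (σ * Real.sqrt (1 + d * η ^ 2))}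
    ∧ ((1 / η ^ 2 ≤ (d : ℝ)) →
        advAcc d (gmix d (fun i => if i = 0 then 1 else η) σ)
            (fun x => if 0 < ∑ i, (if i = 0 then 1 else η) * x i then (1 : ℝ) else -1) (2 * η)
          < 1 / 2) := by
  have hw : ∀ i : Fin (d + 1), (0:ℝ) < if i = 0 then 1 else η := by
    intro i; split <;> norm_num [hη]
  set w : Fin (d + 1) → ℝ := fun i => if i = 0 then 1 else η with hwdef
  set S : (Fin (d + 1) → ℝ) → ℝ := fun x => ∑ i, w i * x i with hSdef
  have hS : Measurable S := by fun_prop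
  set v₀ : ℝ≥0 := (σ ^ 2).toNNReal with hv₀def
  have hv₀R : (v₀ : ℝ) = σ ^ 2 := Real.coe_toNNReal _ (sq_nonneg σ)
  have hd0 : (0:ℝ) < 1 + d * η ^ 2 := by positivity
  set a : ℝ := 2 * η * (1 + d * η) with hadef
  have hwsum : ∑ i, w i = 1 + d * η := by
    rw [Fin.sum_univ_succ]
    simp [hwdef, Fin.succ_ne_zero, mul_comm]
  have hwsq : ∑ i, w i * w i = 1 + d * η ^ 2 := by
    rw [Fin.sum_univ_succ]
    simp [hwdef, Fin.succ_ne_zero, mul_comm, sq]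
  set V : ℝ≥0 := ∑ i : Fin (d + 1), ((show ℝ≥0 from ⟨w i ^ 2, sq_nonneg (w i)⟩) * v₀) with hVdef
  have hVR : (V : ℝ) = (1 + d * η ^ 2) * σ ^ 2 := by
    rw [hVdef]
    push_cast
    change ∑ i, w i ^ 2 * (v₀ : ℝ) = _
    rw [← Finset.sum_mul, show ∑ i, w i ^ 2 = ∑ i, w i * w i from by
      refine Finset.sum_congr rfl fun i _ => (sq (w i))]
    rw [hwsq, hv₀R]
  have hVpos : (0:ℝ) < V := by rw [hVR]; positivity
  have hV : V ≠ 0 := by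
    intro h; rw [h] at hVpos; simp at hVpos
  have hsqV : Real.sqrt (V : ℝ) = σ * Real.sqrt (1 + d * η ^ 2) := by
    rw [hVR, mul_comm, Real.sqrt_mul (by positivity), Real.sqrt_sq hσ.le]
  set c' : ℝ := ((1 + d * η ^ 2) - a) / (σ * Real.sqrt (1 + d * η ^ 2)) with hc'def
  have hden : (0:ℝ) < σ * Real.sqrt (1 + d * η ^ 2) := by positivity
  -- distribution of S under the two conditional laws
  have hmap1 : Measure.map S
      (Measure.pi fun i : Fin (d + 1) => gaussianReal (if i = 0 then 1 else η) (σ ^ 2).toNNReal)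
      = gaussianReal (1 + d * η ^ 2) V := by
    rw [show (1 + (d:ℝ) * η ^ 2) = ∑ i, w i * w i from hwsq.symm]
    exact map_weighted_sum_pi (d + 1) w w (fun _ => v₀)
  have hmap2 : Measure.map S
      (Measure.pi fun i : Fin (d + 1) =>
        gaussianReal (-if i = 0 then 1 else η) (σ ^ 2).toNNReal)
      = gaussianReal (-(1 + d * η ^ 2)) V := by
    rw [show (-(1 + (d:ℝ) * η ^ 2)) = ∑ i, w i * (-(w i)) from by
      rw [← hwsq, ← Finset.sum_neg_distrib]
      exact Finset.sum_congr rfl fun i _ => (mul_neg (w i) (w i)).symm]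
    exact map_weighted_sum_pi (d + 1) w (fun i => -(w i)) (fun _ => v₀)
  -- the measurable superset
  set E' : Set ((Fin (d + 1) → ℝ) × ℝ) :=
    {p | (p.2 = 1 → a < S p.1) ∧ (p.2 = -1 → S p.1 ≤ -a)} with hE'def
  have hE'meas : MeasurableSet E' := by
    have h1 : MeasurableSet {p : (Fin (d + 1) → ℝ) × ℝ | p.2 = 1 → a < S p.1} := by
      have : {p : (Fin (d + 1) → ℝ) × ℝ | p.2 = 1 → a < S p.1}
          = {p : (Fin (d + 1) → ℝ) × ℝ | p.2 = 1}ᶜ ∪ {p | a < S p.1} := by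
        ext p; simp [imp_iff_not_or]
      rw [this]
      exact ((measurable_snd (measurableSet_singleton 1)).compl).union
        (measurableSet_lt measurable_const (hS.comp measurable_fst))
    have h2 : MeasurableSet {p : (Fin (d + 1) → ℝ) × ℝ | p.2 = -1 → S p.1 ≤ -a} := by
      have : {p : (Fin (d + 1) → ℝ) × ℝ | p.2 = -1 → S p.1 ≤ -a}
          = {p : (Fin (d + 1) → ℝ) × ℝ | p.2 = -1}ᶜ ∪ {p | S p.1 ≤ -a} := by
        ext p; simp [imp_iff_not_or]
      rw [this]
      exact ((measurable_snd (measurableSet_singleton (-1))).compl).union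
        (measurableSet_le (hS.comp measurable_fst) measurable_const)
    exact h1.inter h2
  -- the event is contained in E'
  have hsub : {p : (Fin (d + 1) → ℝ) × ℝ | ∀ δ : Fin (d + 1) → ℝ, (∀ i, |δ i| ≤ 2 * η) →
      (fun x => if 0 < ∑ i, (if i = 0 then 1 else η) * x i then (1 : ℝ) else -1) (p.1 + δ) = p.2}
      ⊆ E' := by
    intro p hp
    constructor
    · intro hy
      have h := hp (fun _ => -(2 * η)) (fun i => by rw [abs_neg, abs_of_pos (by positivity)])
      rw [hy] at h
      simp only at h
      have hC : 0 < ∑ i, (if i = 0 then (1:ℝ) else η) * ((p.1 + fun _ => -(2 * η)) : Fin (d + 1) → ℝ) i := by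
        by_contra hc
        rw [if_neg hc] at h
        norm_num at h
      have hexp : ∑ i, (if i = 0 then (1:ℝ) else η) * ((p.1 + fun _ => -(2 * η)) : Fin (d + 1) → ℝ) i
          = S p.1 - 2 * η * ∑ i, w i := by
        rw [hSdef, Finset.mul_sum, ← Finset.sum_sub_distrib]
        refine Finset.sum_congr rfl fun i _ => ?_
        simp only [Pi.add_apply, hwdef]
        ring
      rw [hexp, hwsum] at hC
      rw [hadef]
      linarith
    · intro hy
      have h := hp (fun _ => 2 * η) (fun i => by rw [abs_of_pos (by positivity)])
      rw [hy] at h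
      simp only at h
      have hC : ¬ (0 < ∑ i, (if i = 0 then (1:ℝ) else η) * ((p.1 + fun _ => 2 * η) : Fin (d + 1) → ℝ) i) := by
        intro hc
        rw [if_pos hc] at h
        norm_num at h
      have hexp : ∑ i, (if i = 0 then (1:ℝ) else η) * ((p.1 + fun _ => 2 * η) : Fin (d + 1) → ℝ) i
          = S p.1 + 2 * η * ∑ i, w i := by
        rw [hSdef, Finset.mul_sum, ← Finset.sum_add_distrib]
        refine Finset.sum_congr rfl fun i _ => ?_
        simp only [Pi.add_apply, hwdef]
        ring
      rw [hexp, hwsum] at hC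
      push_neg at hC
      rw [hadef]
      linarith
  -- bound advAcc by a Gaussian tail
  have hbound : advAcc d (gmix d (fun i => if i = 0 then 1 else η) σ)
      (fun x => if 0 < ∑ i, (if i = 0 then 1 else η) * x i then (1 : ℝ) else -1) (2 * η)
      ≤ gaussianReal 0 1 (Set.Iic c') := by
    refine le_trans (measure_mono hsub) ?_
    rw [gmix, Measure.add_apply, Measure.smul_apply, Measure.smul_apply,
      Measure.map_apply measurable_prodMk_right hE'meas,
      Measure.map_apply measurable_prodMk_right hE'meas]
    have hpre1 : (fun x : Fin (d+1) → ℝ => (x, (1:ℝ))) ⁻¹' E' = S ⁻¹' Set.Ioi a := by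
      ext x
      simp [hE'def, Set.mem_preimage, show (1:ℝ) ≠ -1 by norm_num]
    have hpre2 : (fun x : Fin (d+1) → ℝ => (x, (-1:ℝ))) ⁻¹' E' = S ⁻¹' Set.Iic (-a) := by
      ext x
      simp [hE'def, Set.mem_preimage, show (-1:ℝ) ≠ 1 by norm_num]
    rw [hpre1, hpre2,
      ← Measure.map_apply hS measurableSet_Ioi, ← Measure.map_apply hS measurableSet_Iic,
      hmap1, hmap2,
      gaussianReal_Ioi _ _ hV hVpos, gaussianReal_Iic _ _ hV hVpos, hsqV,
      ← hc'def,
      show (-a - -(1 + (d:ℝ) * η ^ 2)) / (σ * Real.sqrt (1 + (d:ℝ) * η ^ 2)) = c' from by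
        rw [hc'def]; ring]
    have hIio : gaussianReal 0 1 (Set.Iio c') ≤ gaussianReal 0 1 (Set.Iic c') :=
      measure_mono Set.Iio_subset_Iic_self
    simp only [smul_eq_mul]
    calc (1/2 : ℝ≥0∞) * gaussianReal 0 1 (Set.Iio c')
          + (1/2 : ℝ≥0∞) * gaussianReal 0 1 (Set.Iic c')
        ≤ (1/2 : ℝ≥0∞) * gaussianReal 0 1 (Set.Iic c')
          + (1/2 : ℝ≥0∞) * gaussianReal 0 1 (Set.Iic c') := by gcongr
      _ = gaussianReal 0 1 (Set.Iic c') := by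
          rw [← add_mul, show (1/2 + 1/2 : ℝ≥0∞) = 1 from by
            rw [ENNReal.div_add_div_same, one_add_one_eq_two]; exact ENNReal.div_self two_ne_zero ofNat_ne_top, one_mul]
  constructor
  · refine le_trans hbound (measure_mono ?_)
    intro t ht
    simp only [Set.mem_Iic] at ht
    simp only [Set.mem_setOf_eq]
    have hkey : (1 - d * η ^ 2) / (σ * Real.sqrt (1 + d * η ^ 2)) - c'
        = 2 * η / (σ * Real.sqrt (1 + d * η ^ 2)) := by
      rw [hc'def, hadef, div_sub_div_same]
      ring_nf
    have hpos : (0:ℝ) < 2 * η / (σ * Real.sqrt (1 + d * η ^ 2)) := by positivity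
    linarith
  · intro hd
    have h1le : (1:ℝ) ≤ d * η ^ 2 := by
      rw [div_le_iff₀ (by positivity)] at hd
      linarith
    have hc'neg : c' < 0 := by
      rw [hc'def, hadef]
      apply div_neg_of_neg_of_pos _ hden
      nlinarith
    refine lt_of_le_of_lt hbound ?_
    rw [← gaussianReal_Iic_zero]
    have hsplit : Set.Iic (0:ℝ) = Set.Iic c' ∪ Set.Ioc c' 0 :=
      (Set.Iic_union_Ioc_eq_Iic hc'neg.le).symm
    rw [hsplit, measure_union (by
      rw [Set.disjoint_left]
      intro x h1 h2
      simp only [Set.mem_Iic] at h1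
      simp only [Set.mem_Ioc] at h2
      linarith) measurableSet_Ioc]
    refine ENNReal.lt_add_right (measure_ne_top _ _) ?_
    intro h0
    have hvol := gaussianReal_absolutelyContinuous' 0 one_ne_zero h0
    rw [Real.volume_Ioc] at hvol
    simp only [ENNReal.ofReal_eq_zero] at hvol
    linarith
end

section
/- Let the training distribution T_hyp be: y uniform on {±1}, x_1 ~ N((1+ε)y, σ²), x_i ~ N((η+ε)y, σ²) i.i.d. for i = 2,...,d+1, with ε > 0, η > 0. Then any linear classifier minimizing the ℓ∞ adversarial 0-1 risk with defense budget ε on T_hyp has all weights positive (w_i > 0 for all i ≥ 1), and the minimizer is equivalent to the natural classifier f_nat(x) = sign(x_1 + η∑_{i≥2} x_i). -/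
open MeasureTheory ProbabilityTheory ENNReal

/-- The ℓ∞ adversarial 0-1 risk of the linear classifier sign(w·x + b) with budget ε. -/
noncomputable def advRisk (d : ℕ) (D : Measure ((Fin (d + 1) → ℝ) × ℝ))
    (w : Fin (d + 1) → ℝ) (b ε : ℝ) : ℝ≥0∞ :=
  D {p | ∃ δ : Fin (d + 1) → ℝ, (∀ i, |δ i| ≤ ε) ∧
    (if 0 < (∑ i, w i * (p.1 i + δ i)) + b then (1 : ℝ) else -1) ≠ p.2}

open Set Real

section auxiliary

lemma lintegral_pi_prod : ∀ (n : ℕ) (μ : Fin n → Measure ℝ), (∀ i, SigmaFinite (μ i)) →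
    ∀ (f : Fin n → ℝ → ℝ≥0∞), (∀ i, Measurable (f i)) →
    ∫⁻ x, ∏ i, f i (x i) ∂Measure.pi μ = ∏ i, ∫⁻ t, f i t ∂μ i := by
  intro n
  induction n with
  | zero =>
      intro μ hμ f hf
      have h1 : ∀ x : Fin 0 → ℝ, ∏ i, f i (x i) = 1 := fun x => Finset.prod_of_isEmpty _
      haveI := hμ
      simp only [h1, Finset.univ_eq_empty, Finset.prod_empty, lintegral_const, one_mul]
      rw [Measure.pi_univ]
      simp
  | succ n ih =>
      intro μ hμ f hf
      haveI := hμ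
      have hmp := measurePreserving_piFinSuccAbove μ 0
      set e := MeasurableEquiv.piFinSuccAbove (fun _ : Fin (n+1) => ℝ) 0
      have hG : Measurable (fun q : ℝ × (Fin n → ℝ) => f 0 q.1 * ∏ j, f (Fin.succ j) (q.2 j)) := by
        apply Measurable.mul ((hf 0).comp measurable_fst)
        apply Finset.measurable_prod
        intro j _
        exact (hf _).comp ((measurable_pi_apply j).comp measurable_snd)
      have key : ∀ x : Fin (n+1) → ℝ,
          ∏ i, f i (x i) = f 0 ((e x).1) * ∏ j, f (Fin.succ j) ((e x).2 j) := by
        intro x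
        rw [Fin.prod_univ_succ]
        congr 1
      have hstep := lintegral_prod_mul (μ := μ 0)
          (ν := Measure.pi fun j => μ (Fin.succAbove 0 j)) (f := f 0)
          (g := fun z : Fin n → ℝ => ∏ j, f (Fin.succ j) (z j)) (hf 0).aemeasurable
          (Finset.measurable_prod _ fun j _ =>
            (hf _).comp (measurable_pi_apply j)).aemeasurable
      calc ∫⁻ x, ∏ i, f i (x i) ∂Measure.pi μ
          = ∫⁻ x, f 0 ((e x).1) * ∏ j, f (Fin.succ j) ((e x).2 j) ∂Measure.pi μ := by
            simp_rw [key]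
        _ = ∫⁻ q, f 0 q.1 * ∏ j, f (Fin.succ j) (q.2 j)
              ∂(μ 0).prod (Measure.pi fun j => μ (Fin.succAbove 0 j)) := by
            rw [← hmp.lintegral_comp hG]
        _ = (∫⁻ t, f 0 t ∂μ 0) * ∏ j, ∫⁻ t, f (Fin.succ j) t ∂μ (Fin.succ j) := by
            rw [hstep]
            congr 1
            have h2 : (fun j => μ (Fin.succAbove 0 j)) = fun j => μ (Fin.succ j) := by
              funext j; rw [Fin.succAbove_zero]
            rw [h2]
            exact ih _ (fun j => hμ _) _ (fun j => hf _)
        _ = ∏ i, ∫⁻ t, f i t ∂μ i :=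
            (Fin.prod_univ_succ (f := fun i : Fin (n+1) => ∫⁻ t, f i t ∂μ i)).symm

lemma pi_gauss_withDensity (n : ℕ) :
    Measure.pi (fun _ : Fin n => gaussianReal 0 1)
      = (volume : Measure (Fin n → ℝ)).withDensity (fun x => ∏ i, gaussianPDF 0 1 (x i)) := by
  refine Measure.pi_eq fun s hs => ?_
  rw [withDensity_apply _ (MeasurableSet.univ_pi hs)]
  have hind : (univ.pi s).indicator (fun x : Fin n → ℝ => ∏ i, gaussianPDF 0 1 (x i))
      = fun x => ∏ i, (s i).indicator (gaussianPDF 0 1) (x i) := by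
    funext x
    by_cases hx : x ∈ univ.pi s
    · rw [indicator_of_mem hx]
      exact Finset.prod_congr rfl fun i _ => (indicator_of_mem (hx i (Set.mem_univ i)) _).symm
    · rw [indicator_of_notMem hx]
      have hex : ∃ j, x j ∉ s j := by simpa [Set.mem_pi] using hx
      obtain ⟨j, hj⟩ := hex
      exact (Finset.prod_eq_zero (Finset.mem_univ j) (indicator_of_notMem hj _)).symm
  rw [← lintegral_indicator (MeasurableSet.univ_pi hs), hind]
  have hvol : (volume : Measure (Fin n → ℝ)) = Measure.pi fun _ => volume := volume_pi
  rw [hvol, lintegral_pi_prod n _ (fun _ => inferInstance) _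
    (fun i => (measurable_gaussianPDF 0 1).indicator (hs i))]
  exact Finset.prod_congr rfl fun i _ => by
    rw [lintegral_indicator (hs i), ← gaussianReal_apply 0 one_ne_zero]

lemma map_withDensity_equiv {α β : Type*} [MeasurableSpace α] [MeasurableSpace β]
    (e : α ≃ᵐ β) (μ : Measure α) (f : α → ℝ≥0∞) (hf : Measurable f) :
    Measure.map e (μ.withDensity f) = (Measure.map e μ).withDensity (f ∘ e.symm) := by
  ext s hs
  rw [Measure.map_apply e.measurable hs, withDensity_apply _ (e.measurable hs),
    withDensity_apply _ hs, setLIntegral_map hs (hf.comp e.symm.measurable) e.measurable]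
  exact lintegral_congr fun x => by simp

lemma map_eval_pi (n : ℕ) (μ : Fin n → Measure ℝ) [∀ i, IsProbabilityMeasure (μ i)] (i : Fin n) :
    Measure.map (Function.eval i) (Measure.pi μ) = μ i := by
  haveI : ∀ j, SigmaFinite (μ j) := fun j => inferInstance
  ext s hs
  rw [Measure.map_apply (measurable_pi_apply i) hs, Set.eval_preimage, Measure.pi_pi]
  rw [Fintype.prod_eq_single i ?_]
  · rw [Function.update_self]
  · intro j hj
    rw [Function.update_of_ne hj]
    exact measure_univ

lemma pi_map_coords (n : ℕ) (f : Fin n → ℝ → ℝ) (hf : ∀ i, Measurable (f i))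
    (P Q : Fin n → Measure ℝ) [∀ i, IsProbabilityMeasure (P i)] [∀ i, IsProbabilityMeasure (Q i)]
    (h : ∀ i, Measure.map (f i) (P i) = Q i) :
    Measure.map (fun x i => f i (x i)) (Measure.pi P) = Measure.pi Q := by
  haveI : ∀ j, SigmaFinite (Q j) := fun j => inferInstance
  refine (Measure.pi_eq fun s hs => ?_).symm
  have hm : Measurable (fun x : Fin n → ℝ => fun i => f i (x i)) :=
    measurable_pi_lambda _ fun i => (hf i).comp (measurable_pi_apply i)
  rw [Measure.map_apply hm (MeasurableSet.univ_pi hs)]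
  have hpre : (fun x : Fin n → ℝ => fun i => f i (x i)) ⁻¹' univ.pi s
      = univ.pi fun i => f i ⁻¹' s i := by
    ext x; simp [Set.mem_pi]
  rw [hpre, Measure.pi_pi]
  exact Finset.prod_congr rfl fun i _ => by
    rw [← h i, Measure.map_apply (hf i) (hs i)]


section core
variable (n : ℕ)

local notation "E" => EuclideanSpace ℝ (Fin (n+1))

lemma gaussPDF_prod_norm (y : E) :
    ∏ i, gaussianPDF 0 1 (y i) =
      ENNReal.ofReal ((Real.sqrt (2 * π))⁻¹ ^ (n+1) * Real.exp (-‖y‖^2 / 2)) := by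
  have h1 : ∀ i, gaussianPDF 0 1 (y i)
      = ENNReal.ofReal ((Real.sqrt (2 * π))⁻¹ * Real.exp (-(y i)^2 / 2)) := by
    intro i
    rw [gaussianPDF_def]
    congr 1
    unfold gaussianPDFReal
    norm_num
  simp_rw [h1]
  rw [← ENNReal.ofReal_prod_of_nonneg]
  · congr 1
    rw [Finset.prod_mul_distrib, Finset.prod_const, ← Real.exp_sum]
    have hnorm : ‖y‖^2 = ∑ i, (y i)^2 := by
      rw [EuclideanSpace.norm_eq, Real.sq_sqrt]
      · exact Finset.sum_congr rfl fun i _ => by rw [Real.norm_eq_abs, sq_abs]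
      · exact Finset.sum_nonneg fun i _ => sq_nonneg _
    rw [hnorm]
    congr 2
    · simp [Finset.card_univ]
    · rw [← Finset.sum_div, ← Finset.sum_neg_distrib]
  · intro i _
    positivity

lemma map_inner_pi (u : Fin (n+1) → ℝ) (hu : ∑ i, (u i)^2 = 1) :
    Measure.map (fun x : Fin (n+1) → ℝ => ∑ i, u i * x i)
      (Measure.pi fun _ => gaussianReal 0 1) = gaussianReal 0 1 := by
  classical
  set meq : E ≃ᵐ (Fin (n+1) → ℝ) := (MeasurableEquiv.toLp 2 (Fin (n+1) → ℝ)).symm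
  set uE : E := (WithLp.equiv 2 (Fin (n+1) → ℝ)).symm u with huE
  have huE_app : ∀ i, uE i = u i := fun i => rfl
  have hnu : ‖uE‖ = 1 := by
    rw [EuclideanSpace.norm_eq]
    have : ∀ i, ‖uE i‖^2 = (u i)^2 := fun i => by rw [huE_app, Real.norm_eq_abs, sq_abs]
    rw [Finset.sum_congr rfl fun i _ => this i, hu, Real.sqrt_one]
  set e0 : E := EuclideanSpace.single 0 (1:ℝ) with he0
  have hne0 : ‖e0‖ = 1 := by rw [EuclideanSpace.norm_single]; norm_num
  set O : E ≃ₗᵢ[ℝ] E := Submodule.reflection (Submodule.span ℝ {uE - e0})ᗮ with hO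
  have hOu : O uE = e0 := Submodule.reflection_sub (by rw [hnu, hne0])
  have hinner : ∀ x : E, (∑ i, u i * x i) = (O x) 0 := by
    intro x
    have h1 : (inner ℝ uE x : ℝ) = ∑ i, u i * x i := by
      rw [PiLp.inner_apply]
      exact Finset.sum_congr rfl fun i _ => by rw [huE_app]; simp [mul_comm]
    have h2 : (inner ℝ e0 (O x) : ℝ) = (O x) 0 := by
      rw [he0, EuclideanSpace.inner_single_left]; simp
    rw [← h1, ← h2, ← hOu, LinearIsometryEquiv.inner_map_map]
  -- measures
  set γpi : Measure (Fin (n+1) → ℝ) := Measure.pi fun _ => gaussianReal 0 1 with hγpi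
  set ρ : (Fin (n+1) → ℝ) → ℝ≥0∞ := fun x => ∏ i, gaussianPDF 0 1 (x i) with hρ
  have hρm : Measurable ρ :=
    Finset.measurable_prod _ fun i _ => (measurable_gaussianPDF 0 1).comp (measurable_pi_apply i)
  set Oe : E ≃ᵐ E := O.toHomeomorph.toMeasurableEquiv with hOe
  have hOe_coe : (Oe : E → E) = O := rfl
  have hOe_symm : (Oe.symm : E → E) = O.symm := rfl
  -- γE invariance
  have hmeq_symm_mp : MeasurePreserving (meq.symm : (Fin (n+1) → ℝ) → E) volume volume :=
    (EuclideanSpace.volume_preserving_symm_measurableEquiv_toLp (Fin (n+1))).symm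
  set γE : Measure E := Measure.map meq.symm γpi with hγE
  have hγE_density : γE = (volume : Measure E).withDensity (ρ ∘ meq) := by
    rw [hγE, hγpi, pi_gauss_withDensity, map_withDensity_equiv meq.symm _ _ hρm,
      hmeq_symm_mp.map_eq]
    congr 1
  have hρ_norm : ∀ y : E, (ρ ∘ meq) y
      = ENNReal.ofReal ((Real.sqrt (2 * π))⁻¹ ^ (n+1) * Real.exp (-‖y‖^2 / 2)) := by
    intro y
    have : ∀ i, (meq y) i = y i := fun i => by
      rfl
    simp only [Function.comp_apply, hρ]
    rw [Finset.prod_congr rfl fun i _ => by rw [this i]]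
    exact gaussPDF_prod_norm n y
  have hinv : Measure.map Oe γE = γE := by
    rw [hγE_density, map_withDensity_equiv Oe _ _ (hρm.comp meq.measurable)]
    rw [hOe_coe, (O.measurePreserving).map_eq]
    congr 1
    funext y
    have h1 := hρ_norm (Oe.symm y)
    have h2 := hρ_norm y
    simp only [Function.comp_apply] at h1 h2
    show ρ (meq (Oe.symm y)) = ρ (meq y)
    rw [h1, h2, hOe_symm, O.symm.norm_map]
  -- assemble
  have hcomp : (fun x : Fin (n+1) → ℝ => ∑ i, u i * x i)
      = (Function.eval 0) ∘ (meq : E → Fin (n+1) → ℝ) ∘ (Oe : E → E) ∘ (meq.symm : (Fin (n+1) → ℝ) → E) := by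
    funext x
    simp only [Function.comp_apply, Function.eval]
    have hx : ∀ i, (meq.symm x) i = x i := fun i => by
      rfl
    have h3 : (meq (Oe (meq.symm x))) 0 = (O (meq.symm x)) 0 := by
      rw [hOe_coe]
      rfl
    rw [h3, ← hinner (meq.symm x)]
    exact Finset.sum_congr rfl fun i _ => by rw [hx i]
  rw [hcomp]
  have m1 : Measurable (⇑meq.symm) := meq.symm.measurable
  have m2 : Measurable (⇑Oe) := Oe.measurable
  have m3 : Measurable (⇑meq) := meq.measurable
  have m4 : Measurable (Function.eval 0 : (Fin (n+1) → ℝ) → ℝ) := measurable_pi_apply 0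
  rw [← Measure.map_map m4 (m3.comp (m2.comp m1)), ← Measure.map_map m3 (m2.comp m1),
    ← Measure.map_map m2 m1]
  show Measure.map (Function.eval 0) (Measure.map meq (Measure.map Oe γE)) = _
  rw [hinv, hγE, Measure.map_map m3 m1]
  have hid : (⇑meq) ∘ (⇑meq.symm) = id := by funext x; simp
  rw [hid, Measure.map_id, hγpi, map_eval_pi]

end core


lemma gauss_affine (s m : ℝ) (v : NNReal) :
    Measure.map (fun t => s * t + m) (gaussianReal 0 v)
      = gaussianReal m ((s^2 : ℝ).toNNReal * v) := by
  have hc : (fun t : ℝ => s * t + m) = (· + m) ∘ (s * ·) := rfl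
  rw [hc, ← Measure.map_map (measurable_add_const m) (measurable_const_mul s),
    gaussianReal_map_const_mul, gaussianReal_map_add_const]
  congr 1
  · ring
  · ext
    simp [Real.coe_toNNReal _ (sq_nonneg s)]

lemma meas_L {n : ℕ} (w : Fin n → ℝ) : Measurable (fun x : Fin n → ℝ => ∑ i, w i * x i) :=
  Finset.measurable_sum _ fun i _ => by fun_prop

lemma map_L (n : ℕ) (w μv : Fin (n+1) → ℝ) (hw : w ≠ 0) (σ : ℝ) (hσ : 0 < σ) :
    Measure.map (fun x : Fin (n+1) → ℝ => ∑ i, w i * x i)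
        (Measure.pi fun i => gaussianReal (μv i) ((σ^2 : ℝ).toNNReal))
      = gaussianReal (∑ i, w i * μv i)
          ((((σ * Real.sqrt (∑ i, (w i)^2))^2 : ℝ)).toNNReal) := by
  classical
  have hsum : 0 < ∑ i, (w i)^2 := by
    obtain ⟨j, hj⟩ := Function.ne_iff.mp hw
    have h1 : (w j)^2 ≤ ∑ i, (w i)^2 :=
      Finset.single_le_sum (fun i _ => sq_nonneg (w i)) (Finset.mem_univ j)
    have h2 : 0 < (w j)^2 := lt_of_le_of_ne (sq_nonneg _) (Ne.symm (pow_ne_zero 2 hj))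
    linarith
  set r := Real.sqrt (∑ i, (w i)^2) with hr
  have hrpos : 0 < r := Real.sqrt_pos.mpr hsum
  have hr2 : r^2 = ∑ i, (w i)^2 := Real.sq_sqrt hsum.le
  set u : Fin (n+1) → ℝ := fun i => w i / r with hu
  have husum : ∑ i, (u i)^2 = 1 := by
    simp_rw [hu, div_pow, ← Finset.sum_div]
    rw [← hr2]
    field_simp
  -- Step A : the product measure as pushforward of standard product
  have stepA : Measure.pi (fun i => gaussianReal (μv i) ((σ^2 : ℝ).toNNReal))
      = Measure.map (fun x : Fin (n+1) → ℝ => fun i => σ * x i + μv i)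
          (Measure.pi fun _ => gaussianReal 0 1) := by
    refine (pi_map_coords (n+1) (fun i t => σ * t + μv i)
      (fun i => (measurable_const_mul σ).add_const _) _ _ (fun i => ?_)).symm
    rw [gauss_affine]
    congr 1
    simp
  have hT : Measurable (fun x : Fin (n+1) → ℝ => fun i => σ * x i + μv i) :=
    measurable_pi_lambda _ fun i => by fun_prop
  rw [stepA, Measure.map_map (meas_L w) hT]
  have hcomp : ((fun x : Fin (n+1) → ℝ => ∑ i, w i * x i)
        ∘ (fun x : Fin (n+1) → ℝ => fun i => σ * x i + μv i))
      = (fun t => σ * t + (∑ i, w i * μv i)) ∘ (fun x : Fin (n+1) → ℝ => ∑ i, w i * x i) := by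
    funext x
    simp only [Function.comp_apply]
    rw [Finset.mul_sum, ← Finset.sum_add_distrib]
    exact Finset.sum_congr rfl fun i _ => by ring
  rw [hcomp, ← Measure.map_map ((measurable_const_mul σ).add_const _) (meas_L w)]
  have hLdecomp : (fun x : Fin (n+1) → ℝ => ∑ i, w i * x i)
      = (fun t => r * t) ∘ (fun x : Fin (n+1) → ℝ => ∑ i, u i * x i) := by
    funext x
    simp only [Function.comp_apply, hu]
    rw [Finset.mul_sum]
    exact Finset.sum_congr rfl fun i _ => by field_simp
  rw [hLdecomp, ← Measure.map_map (measurable_const_mul r) (meas_L u),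
    map_inner_pi n u husum]
  have : Measure.map (fun t => r * t) (gaussianReal 0 1)
      = gaussianReal 0 ((r^2 : ℝ).toNNReal) := by
    rw [gaussianReal_map_const_mul]
    congr 1
    · ring
    · ext; simp [Real.coe_toNNReal _ (sq_nonneg r)]
  rw [this, gauss_affine]
  congr 1
  ext
  have h1 : (0:ℝ) ≤ σ^2 := sq_nonneg _
  have h2 : (0:ℝ) ≤ r^2 := sq_nonneg _
  simp only [NNReal.coe_mul, Real.coe_toNNReal _ h1, Real.coe_toNNReal _ h2,
    Real.coe_toNNReal _ (sq_nonneg (σ * r)), mul_pow]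
  rw [Real.coe_toNNReal _ (mul_nonneg h1 h2)]

lemma gauss_Iic (m s t : ℝ) (hs : 0 < s) :
    gaussianReal m ((s^2 : ℝ).toNNReal) (Iic t) = gaussianReal 0 1 (Iic ((t - m)/s)) := by
  have h : gaussianReal m ((s^2 : ℝ).toNNReal) = Measure.map (fun z => s * z + m) (gaussianReal 0 1) := by
    rw [gauss_affine]; congr 1; simp
  rw [h, Measure.map_apply ((measurable_const_mul s).add_const m) measurableSet_Iic]
  congr 1
  ext z
  simp only [mem_preimage, mem_Iic]
  rw [le_div_iff₀ hs]
  constructor <;> intro <;> nlinarith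


lemma continuous_gpdf : Continuous (gaussianPDFReal 0 1) := by
  unfold gaussianPDFReal
  exact continuous_const.mul (Real.continuous_exp.comp
    (((continuous_id.sub continuous_const).pow 2).neg.div_const _))

lemma gauss_pos_Ioc {t t' : ℝ} (h : t < t') : 0 < gaussianReal 0 1 (Ioc t t') := by
  by_contra hle
  push_neg at hle
  have h0 : gaussianReal 0 1 (Ioc t t') = 0 := le_antisymm hle zero_le
  have := (gaussianReal_absolutelyContinuous' 0 one_ne_zero) h0
  rw [Real.volume_Ioc] at this
  simp only [ENNReal.ofReal_eq_zero] at this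
  linarith

lemma Phi_lt_Phi {t t' : ℝ} (h : t < t') :
    gaussianReal 0 1 (Iic t) < gaussianReal 0 1 (Iic t') := by
  have hsplit : gaussianReal 0 1 (Iic t') = gaussianReal 0 1 (Iic t) + gaussianReal 0 1 (Ioc t t') := by
    rw [← measure_union (Iic_disjoint_Ioc le_rfl) measurableSet_Ioc, Iic_union_Ioc_eq_Iic h.le]
  rw [hsplit]
  exact ENNReal.lt_add_right (measure_ne_top _ _) (gauss_pos_Ioc h).ne'

lemma Phi_mono {t t' : ℝ} (h : t ≤ t') :
    gaussianReal 0 1 (Iic t) ≤ gaussianReal 0 1 (Iic t') :=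
  measure_mono (Iic_subset_Iic.mpr h)

lemma gpdf_even (x : ℝ) : gaussianPDFReal 0 1 (-x) = gaussianPDFReal 0 1 x := by
  unfold gaussianPDFReal
  rw [show (-x - 0:ℝ)^2 = (x - 0)^2 from by ring]

lemma interval_compare {a β : ℝ} (ha : 0 < a) (hβ : 0 < β) :
    gaussianReal 0 1 (Ioc (-a - β) (-a)) < gaussianReal 0 1 (Ioc (-a) (-a + β)) := by
  rw [gaussianReal_apply_eq_integral 0 one_ne_zero, gaussianReal_apply_eq_integral 0 one_ne_zero]
  have hle1 : -a - β ≤ -a := by linarith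
  have hle2 : -a ≤ -a + β := by linarith
  have h0 : 0 ≤ ∫ x in Ioc (-a - β) (-a), gaussianPDFReal 0 1 x :=
    setIntegral_nonneg measurableSet_Ioc fun x _ => gaussianPDFReal_nonneg 0 1 x
  have hreal : (∫ x in Ioc (-a - β) (-a), gaussianPDFReal 0 1 x)
      < ∫ x in Ioc (-a) (-a + β), gaussianPDFReal 0 1 x := by
    rw [← intervalIntegral.integral_of_le hle1, ← intervalIntegral.integral_of_le hle2]
    have h2 : ∫ x in (-a)..(-a + β), gaussianPDFReal 0 1 x
        = ∫ x in (-a - β)..(-a), gaussianPDFReal 0 1 (x + 2*a) := by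
      rw [intervalIntegral.integral_comp_add_right (gaussianPDFReal 0 1) (2*a)]
      rw [show -a - β + 2*a = a - β from by ring, show -a + 2*a = a from by ring]
      have h4 : ∫ x in (a-β)..a, gaussianPDFReal 0 1 x
          = ∫ x in (a-β)..a, gaussianPDFReal 0 1 (-x) :=
        intervalIntegral.integral_congr fun x _ => (gpdf_even x).symm
      rw [h4, intervalIntegral.integral_comp_neg, show -(a - β) = -a + β from by ring]
    rw [h2]
    have hii : IntervalIntegrable (fun x => gaussianPDFReal 0 1 (x + 2*a)) volume (-a-β) (-a) :=
      (continuous_gpdf.comp (continuous_id.add continuous_const)).intervalIntegrable _ _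
    have hii0 : IntervalIntegrable (gaussianPDFReal 0 1) volume (-a-β) (-a) :=
      continuous_gpdf.intervalIntegrable _ _
    have hpos : 0 < ∫ x in (-a-β)..(-a), (gaussianPDFReal 0 1 (x + 2*a) - gaussianPDFReal 0 1 x) := by
      apply intervalIntegral.intervalIntegral_pos_of_pos_on (hii.sub hii0)
      · intro x hx
        obtain ⟨hx1, hx2⟩ := hx
        unfold gaussianPDFReal
        simp only [NNReal.coe_one]
        have hlt : Real.exp (-(x - 0)^2 / (2*1)) < Real.exp (-(x + 2*a - 0)^2 / (2*1)) := by
          apply Real.exp_lt_exp.mpr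
          nlinarith
        have hcpos : (0:ℝ) < (Real.sqrt (2 * π * 1))⁻¹ := by
          rw [inv_pos]
          apply Real.sqrt_pos.mpr
          positivity
        nlinarith
      · linarith
    rw [intervalIntegral.integral_sub hii hii0] at hpos
    linarith
  exact (ENNReal.ofReal_lt_ofReal_iff (lt_of_le_of_lt h0 hreal)).mpr hreal

lemma gauss_reflect (t : ℝ) : gaussianReal 0 1 (Ici t) = gaussianReal 0 1 (Iic (-t)) := by
  have hmap : Measure.map (fun x : ℝ => -x) (gaussianReal 0 1) = gaussianReal 0 1 := by
    have : (fun x : ℝ => -x) = ((-1 : ℝ) * ·) := by funext x; ring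
    rw [this, gaussianReal_map_const_mul]
    congr 1
    · ring
    · ext; norm_num
  conv_lhs => rw [← hmap]
  rw [Measure.map_apply measurable_neg measurableSet_Ici]
  congr 1
  ext x
  simp only [mem_preimage, mem_Ici, mem_Iic]
  constructor <;> intro <;> linarith

lemma Phi_neg_lt_half {a : ℝ} (ha : 0 < a) :
    gaussianReal 0 1 (Iic (-a)) + gaussianReal 0 1 (Iic (-a)) < 1 := by
  have hpart : (Iic (-a)) ∪ (Ioo (-a) a) ∪ (Ici a) = (univ : Set ℝ) := by
    ext x
    simp only [mem_union, mem_Iic, mem_Ioo, mem_Ici, mem_univ, iff_true]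
    by_cases h1 : x ≤ -a
    · left; left; exact h1
    · by_cases h2 : x < a
      · left; right; exact ⟨lt_of_not_ge h1, h2⟩
      · right; linarith [lt_of_not_ge h1]
  have hd1 : Disjoint (Iic (-a)) (Ioo (-a) a) := by
    rw [Set.disjoint_left]; intro x hx hx'; exact absurd hx (not_le.mpr hx'.1)
  have hd2 : Disjoint ((Iic (-a)) ∪ (Ioo (-a) a)) (Ici a) := by
    rw [Set.disjoint_left]; intro x hx hx'
    rcases hx with h | h
    · rw [mem_Iic] at h; rw [mem_Ici] at hx'; linarith
    · exact absurd h.2 (not_lt.mpr hx')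
  have h1 : (1 : ℝ≥0∞) = gaussianReal 0 1 (Iic (-a)) + gaussianReal 0 1 (Ioo (-a) a)
      + gaussianReal 0 1 (Ici a) := by
    rw [← measure_union hd1 measurableSet_Ioo, ← measure_union hd2 measurableSet_Ici, hpart]
    exact measure_univ.symm
  rw [gauss_reflect] at h1
  have hIoo : 0 < gaussianReal 0 1 (Ioo (-a) a) := by
    have hsub : Ioc (-a) 0 ⊆ Ioo (-a) a := fun x hx => ⟨hx.1, lt_of_le_of_lt hx.2 ha⟩
    exact lt_of_lt_of_le (gauss_pos_Ioc (by linarith)) (measure_mono hsub)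
  have hfin : gaussianReal 0 1 (Iic (-a)) + gaussianReal 0 1 (Iic (-a)) ≠ ⊤ :=
    ENNReal.add_ne_top.mpr ⟨measure_ne_top _ _, measure_ne_top _ _⟩
  calc gaussianReal 0 1 (Iic (-a)) + gaussianReal 0 1 (Iic (-a))
      < gaussianReal 0 1 (Iic (-a)) + gaussianReal 0 1 (Iic (-a)) + gaussianReal 0 1 (Ioo (-a) a) :=
        ENNReal.lt_add_right hfin hIoo.ne'
    _ = 1 := by rw [h1]; ring

lemma beta_ineq_strict {a β : ℝ} (ha : 0 < a) (hβ : β ≠ 0) :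
    gaussianReal 0 1 (Iic (-a)) + gaussianReal 0 1 (Iic (-a))
      < gaussianReal 0 1 (Iic (-a - β)) + gaussianReal 0 1 (Iic (-a + β)) := by
  have main : ∀ b : ℝ, 0 < b →
      gaussianReal 0 1 (Iic (-a)) + gaussianReal 0 1 (Iic (-a))
        < gaussianReal 0 1 (Iic (-a - b)) + gaussianReal 0 1 (Iic (-a + b)) := by
    intro b hb
    have e1 : gaussianReal 0 1 (Iic (-a))
        = gaussianReal 0 1 (Iic (-a - b)) + gaussianReal 0 1 (Ioc (-a - b) (-a)) := by
      rw [← measure_union (Iic_disjoint_Ioc le_rfl) measurableSet_Ioc,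
        Iic_union_Ioc_eq_Iic (by linarith)]
    have e2 : gaussianReal 0 1 (Iic (-a + b))
        = gaussianReal 0 1 (Iic (-a)) + gaussianReal 0 1 (Ioc (-a) (-a + b)) := by
      rw [← measure_union (Iic_disjoint_Ioc le_rfl) measurableSet_Ioc,
        Iic_union_Ioc_eq_Iic (by linarith)]
    calc gaussianReal 0 1 (Iic (-a)) + gaussianReal 0 1 (Iic (-a))
        = gaussianReal 0 1 (Iic (-a - b)) + (gaussianReal 0 1 (Iic (-a))
            + gaussianReal 0 1 (Ioc (-a - b) (-a))) := by rw [e1]; ring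
      _ < gaussianReal 0 1 (Iic (-a - b)) + (gaussianReal 0 1 (Iic (-a))
            + gaussianReal 0 1 (Ioc (-a) (-a + b))) := by
          apply ENNReal.add_lt_add_left (measure_ne_top _ _)
          exact ENNReal.add_lt_add_left (measure_ne_top _ _) (interval_compare ha hb)
      _ = gaussianReal 0 1 (Iic (-a - b)) + gaussianReal 0 1 (Iic (-a + b)) := by rw [e2]
  rcases lt_or_gt_of_ne hβ with h | h
  · have := main (-β) (by linarith)
    rw [show -a - -β = -a + β from by ring, show -a + -β = -a - β from by ring] at this
    calc gaussianReal 0 1 (Iic (-a)) + gaussianReal 0 1 (Iic (-a))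
        < gaussianReal 0 1 (Iic (-a + β)) + gaussianReal 0 1 (Iic (-a - β)) := this
      _ = _ := by ring
  · exact main β h

lemma key_opt {a c β : ℝ} (ha : 0 < a) (hc : c ≤ a) (hne : ¬(c = a ∧ β = 0)) :
    gaussianReal 0 1 (Iic (-a)) + gaussianReal 0 1 (Iic (-a))
      < gaussianReal 0 1 (Iic (-c - β)) + gaussianReal 0 1 (Iic (-c + β)) := by
  rcases eq_or_lt_of_le hc with heq | hlt
  · have hβ : β ≠ 0 := fun h => hne ⟨heq, h⟩
    subst heq
    exact beta_ineq_strict ha hβ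
  · by_cases hβ : β = 0
    · subst hβ
      simp only [sub_zero, add_zero]
      have h1 := Phi_lt_Phi (show -a < -c by linarith)
      calc gaussianReal 0 1 (Iic (-a)) + gaussianReal 0 1 (Iic (-a))
          < gaussianReal 0 1 (Iic (-c)) + gaussianReal 0 1 (Iic (-a)) :=
            ENNReal.add_lt_add_right (measure_ne_top _ _) h1
        _ ≤ gaussianReal 0 1 (Iic (-c)) + gaussianReal 0 1 (Iic (-c)) :=
            add_le_add le_rfl h1.le
        _ = _ := by ring_nf
    · calc gaussianReal 0 1 (Iic (-a)) + gaussianReal 0 1 (Iic (-a))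
          < gaussianReal 0 1 (Iic (-a - β)) + gaussianReal 0 1 (Iic (-a + β)) :=
            beta_ineq_strict ha hβ
        _ ≤ gaussianReal 0 1 (Iic (-c - β)) + gaussianReal 0 1 (Iic (-c + β)) := by
            apply add_le_add (Phi_mono (by linarith)) (Phi_mono (by linarith))


section setlemmas
variable {n : ℕ} (w : Fin n → ℝ) (b ε : ℝ)

lemma sum_bound {δ : Fin n → ℝ} (hδ : ∀ i, |δ i| ≤ ε) :
    |∑ i, w i * δ i| ≤ ε * ∑ i, |w i| := by
  calc |∑ i, w i * δ i| ≤ ∑ i, |w i * δ i| := Finset.abs_sum_le_sum_abs _ _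
    _ ≤ ∑ i, |w i| * ε := by
        apply Finset.sum_le_sum
        intro i _
        rw [abs_mul]
        exact mul_le_mul_of_nonneg_left (hδ i) (abs_nonneg _)
    _ = ε * ∑ i, |w i| := by rw [← Finset.sum_mul]; ring

lemma err_iff_1 (hε : 0 ≤ ε) (x : Fin n → ℝ) :
    (∃ δ : Fin n → ℝ, (∀ i, |δ i| ≤ ε) ∧
        (if 0 < (∑ i, w i * (x i + δ i)) + b then (1 : ℝ) else -1) ≠ (1:ℝ))
      ↔ ∑ i, w i * x i ≤ ε * ∑ i, |w i| - b := by
  have hexp : ∀ δ : Fin n → ℝ, ∑ i, w i * (x i + δ i) = ∑ i, w i * x i + ∑ i, w i * δ i := by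
    intro δ
    rw [← Finset.sum_add_distrib]
    exact Finset.sum_congr rfl fun i _ => by ring
  constructor
  · rintro ⟨δ, hδ, hne⟩
    have hnot : ¬(0 < (∑ i, w i * (x i + δ i)) + b) := by
      intro h
      rw [if_pos h] at hne
      exact hne rfl
    push_neg at hnot
    rw [hexp] at hnot
    have := abs_le.mp (sum_bound w ε hδ)
    linarith [this.1]
  · intro h
    refine ⟨fun i => if 0 ≤ w i then -ε else ε, fun i => ?_, ?_⟩
    · by_cases hw : 0 ≤ w i <;> simp [hw, abs_of_nonneg hε, abs_neg]
    · have hsum : ∑ i, w i * (if 0 ≤ w i then -ε else ε) = -(ε * ∑ i, |w i|) := by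
        rw [Finset.mul_sum, ← Finset.sum_neg_distrib]
        apply Finset.sum_congr rfl
        intro i _
        by_cases hw : 0 ≤ w i
        · rw [if_pos hw, abs_of_nonneg hw]; ring
        · rw [if_neg hw, abs_of_neg (lt_of_not_ge hw)]; ring
      rw [hexp, hsum, if_neg (by linarith)]
      norm_num

lemma err_iff_2 (hε : 0 ≤ ε) (x : Fin n → ℝ) :
    (∃ δ : Fin n → ℝ, (∀ i, |δ i| ≤ ε) ∧
        (if 0 < (∑ i, w i * (x i + δ i)) + b then (1 : ℝ) else -1) ≠ (-1:ℝ))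
      ↔ -(ε * ∑ i, |w i|) - b < ∑ i, w i * x i := by
  have hexp : ∀ δ : Fin n → ℝ, ∑ i, w i * (x i + δ i) = ∑ i, w i * x i + ∑ i, w i * δ i := by
    intro δ
    rw [← Finset.sum_add_distrib]
    exact Finset.sum_congr rfl fun i _ => by ring
  constructor
  · rintro ⟨δ, hδ, hne⟩
    have hpos : 0 < (∑ i, w i * (x i + δ i)) + b := by
      by_contra h
      rw [if_neg h] at hne
      exact hne rfl
    rw [hexp] at hpos
    have := abs_le.mp (sum_bound w ε hδ)
    linarith [this.2]
  · intro h
    refine ⟨fun i => if 0 ≤ w i then ε else -ε, fun i => ?_, ?_⟩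
    · by_cases hw : 0 ≤ w i <;> simp [hw, abs_of_nonneg hε, abs_neg]
    · have hsum : ∑ i, w i * (if 0 ≤ w i then ε else -ε) = ε * ∑ i, |w i| := by
        rw [Finset.mul_sum]
        apply Finset.sum_congr rfl
        intro i _
        by_cases hw : 0 ≤ w i
        · rw [if_pos hw, abs_of_nonneg hw]; ring
        · rw [if_neg hw, abs_of_neg (lt_of_not_ge hw)]; ring
      rw [hexp, hsum, if_pos (by linarith)]
      norm_num

end setlemmas

section formula
variable (d : ℕ) (η σ ε : ℝ)

lemma advRisk_formula (hσ : 0 < σ) (hε : 0 ≤ ε) (μh : Fin (d+1) → ℝ)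
    (w : Fin (d+1) → ℝ) (hw : w ≠ 0) (b : ℝ) :
    advRisk d (gmix d μh σ) w b ε
      = 1/2 * (gaussianReal 0 1 (Iic ((ε * ∑ i, |w i| - b - ∑ i, w i * μh i)
            / (σ * Real.sqrt (∑ i, (w i)^2))))
          + gaussianReal 0 1 (Iic ((ε * ∑ i, |w i| + b - ∑ i, w i * μh i)
            / (σ * Real.sqrt (∑ i, (w i)^2))))) := by
  classical
  set A : ℝ := ε * ∑ i, |w i| with hA
  set m : ℝ := ∑ i, w i * μh i with hm
  set r : ℝ := Real.sqrt (∑ i, (w i)^2) with hr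
  have hsum : 0 < ∑ i, (w i)^2 := by
    obtain ⟨j, hj⟩ := Function.ne_iff.mp hw
    have h1 : (w j)^2 ≤ ∑ i, (w i)^2 :=
      Finset.single_le_sum (fun i _ => sq_nonneg (w i)) (Finset.mem_univ j)
    have h2 : 0 < (w j)^2 := lt_of_le_of_ne (sq_nonneg _) (Ne.symm (pow_ne_zero 2 hj))
    linarith
  have hrpos : 0 < r := Real.sqrt_pos.mpr hsum
  have hspos : 0 < σ * r := mul_pos hσ hrpos
  set P : Measure (Fin (d+1) → ℝ) := Measure.pi fun i => gaussianReal (μh i) ((σ^2).toNNReal) with hP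
  set Q : Measure (Fin (d+1) → ℝ) := Measure.pi fun i => gaussianReal (-μh i) ((σ^2).toNNReal) with hQ
  rw [advRisk, gmix]
  rw [Measure.add_apply, Measure.smul_apply, Measure.smul_apply, smul_eq_mul, smul_eq_mul]
  rw [(measurableEmbedding_prod_mk_right (1:ℝ)).map_apply,
    (measurableEmbedding_prod_mk_right (-1:ℝ)).map_apply]
  have hpre1 : ((fun x : Fin (d+1) → ℝ => (x, (1:ℝ))) ⁻¹'
      {p : (Fin (d+1) → ℝ) × ℝ | ∃ δ : Fin (d+1) → ℝ, (∀ i, |δ i| ≤ ε) ∧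
        (if 0 < (∑ i, w i * (p.1 i + δ i)) + b then (1 : ℝ) else -1) ≠ p.2})
      = (fun x : Fin (d+1) → ℝ => ∑ i, w i * x i) ⁻¹' (Iic (A - b)) := by
    ext x
    simp only [mem_preimage, mem_setOf_eq, mem_Iic]
    rw [err_iff_1 w b ε hε x]
  have hpre2 : ((fun x : Fin (d+1) → ℝ => (x, (-1:ℝ))) ⁻¹'
      {p : (Fin (d+1) → ℝ) × ℝ | ∃ δ : Fin (d+1) → ℝ, (∀ i, |δ i| ≤ ε) ∧
        (if 0 < (∑ i, w i * (p.1 i + δ i)) + b then (1 : ℝ) else -1) ≠ p.2})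
      = (fun x : Fin (d+1) → ℝ => ∑ i, w i * x i) ⁻¹' (Ioi (-A - b)) := by
    ext x
    simp only [mem_preimage, mem_setOf_eq, mem_Ioi]
    rw [err_iff_2 w b ε hε x]
  rw [hpre1, hpre2]
  rw [← Measure.map_apply (meas_L w) measurableSet_Iic,
    ← Measure.map_apply (meas_L w) measurableSet_Ioi]
  rw [show P = Measure.pi fun i => gaussianReal (μh i) ((σ^2).toNNReal) from rfl] at *
  rw [map_L d w μh hw σ hσ, map_L d w (fun i => -μh i) hw σ hσ]
  have hmneg : ∑ i, w i * (fun i => -μh i) i = -m := by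
    rw [hm, ← Finset.sum_neg_distrib]
    exact Finset.sum_congr rfl fun i _ => by ring
  rw [hmneg]
  -- first term
  rw [gauss_Iic m (σ * r) (A - b) hspos]
  -- second term: Ioi for mean -m
  have hIoi : gaussianReal (-m) (((σ*r)^2).toNNReal) (Ioi (-A - b))
      = gaussianReal 0 1 (Iic ((A + b - m)/(σ*r))) := by
    have h1 : gaussianReal (-m) (((σ*r)^2 : ℝ).toNNReal)
        = Measure.map (fun z => (σ*r) * z + -m) (gaussianReal 0 1) := by
      rw [gauss_affine]
      congr 1
      simp
    rw [h1, Measure.map_apply ((measurable_const_mul _).add_const _) measurableSet_Ioi]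
    have h2 : (fun z => (σ*r) * z + -m) ⁻¹' (Ioi (-A - b)) = Ioi ((-A - b + m)/(σ*r)) := by
      ext z
      simp only [mem_preimage, mem_Ioi]
      rw [div_lt_iff₀ hspos]
      constructor <;> intro <;> nlinarith
    rw [h2]
    have h3 : gaussianReal 0 1 (Ioi ((-A - b + m)/(σ*r)))
        = gaussianReal 0 1 (Ici ((-A - b + m)/(σ*r))) := by
      apply le_antisymm (measure_mono Ioi_subset_Ici_self)
      have hs : gaussianReal 0 1 {((-A - b + m)/(σ*r))} = 0 :=
        (gaussianReal_absolutelyContinuous 0 one_ne_zero) (volume_singleton)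
      have hu : Ici ((-A - b + m)/(σ*r)) = Ioi ((-A - b + m)/(σ*r)) ∪ {((-A - b + m)/(σ*r))} := by
        ext y
        simp only [mem_Ici, mem_union, mem_Ioi, mem_singleton_iff]
        constructor
        · intro h; rcases lt_or_eq_of_le h with h' | h'
          · left; exact h'
          · right; exact h'.symm
        · rintro (h | h) <;> [linarith; exact h.ge]
      rw [hu]
      exact (measure_union_le _ _).trans (by rw [hs, add_zero])
    rw [h3, gauss_reflect]
    congr 2
    field_simp
    ring
  rw [hIoi, mul_add]

lemma advRisk_zero (hε : 0 ≤ ε) (μh : Fin (d+1) → ℝ) (b : ℝ) :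
    advRisk d (gmix d μh σ) 0 b ε = 1/2 := by
  classical
  rw [advRisk, gmix]
  rw [Measure.add_apply, Measure.smul_apply, Measure.smul_apply, smul_eq_mul, smul_eq_mul]
  rw [(measurableEmbedding_prod_mk_right (1:ℝ)).map_apply,
    (measurableEmbedding_prod_mk_right (-1:ℝ)).map_apply]
  have hset : ∀ y : ℝ, ((fun x : Fin (d+1) → ℝ => (x, y)) ⁻¹'
      {p : (Fin (d+1) → ℝ) × ℝ | ∃ δ : Fin (d+1) → ℝ, (∀ i, |δ i| ≤ ε) ∧
        (if 0 < (∑ i, (0 : Fin (d+1) → ℝ) i * (p.1 i + δ i)) + b then (1 : ℝ) else -1) ≠ p.2})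
      = if (if 0 < b then (1:ℝ) else -1) ≠ y then univ else (∅ : Set (Fin (d+1) → ℝ)) := by
    intro y
    ext x
    simp only [mem_preimage, mem_setOf_eq, Pi.zero_apply, zero_mul, Finset.sum_const_zero, zero_add]
    by_cases hb : (if 0 < b then (1:ℝ) else -1) ≠ y
    · rw [if_pos hb]
      simp only [mem_univ, iff_true]
      exact ⟨0, fun i => by simpa using hε, hb⟩
    · rw [if_neg hb]
      push_neg at hb
      simp only [mem_empty_iff_false, iff_false, not_exists]
      intro δ
      rintro ⟨-, hne⟩
      exact hne hb
  rw [hset 1, hset (-1)]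
  haveI : IsProbabilityMeasure (Measure.pi fun i : Fin (d+1) => gaussianReal (μh i) ((σ^2).toNNReal)) := by
    infer_instance
  haveI : IsProbabilityMeasure (Measure.pi fun i : Fin (d+1) => gaussianReal (-μh i) ((σ^2).toNNReal)) := by
    infer_instance
  by_cases hb : 0 < b
  · rw [if_pos hb]
    norm_num
  · rw [if_neg hb]
    norm_num

end formula


end auxiliary

/-- On the hypocritically perturbed mixture T_hyp (means (1+ε, η+ε, ..., η+ε)), any linear
classifier minimizing the ℓ∞ adversarial 0-1 risk with defense budget ε has all weights
positive and is equivalent to the natural classifier sign(x_1 + η ∑_{i≥2} x_i). -/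
theorem minimizer_on_Thyp_is_natural (d : ℕ) (η σ ε : ℝ)
    (hη : 0 < η) (hσ : 0 < σ) (hε : 0 < ε)
    (w : Fin (d + 1) → ℝ) (b : ℝ)
    (hmin : ∀ (w' : Fin (d + 1) → ℝ) (b' : ℝ),
      advRisk d (gmix d (fun i => if i = 0 then 1 + ε else η + ε) σ) w b ε
        ≤ advRisk d (gmix d (fun i => if i = 0 then 1 + ε else η + ε) σ) w' b' ε) :
    (∀ i : Fin (d + 1), 0 < w i) ∧
      ∃ c : ℝ, 0 < c ∧ (∀ i : Fin (d + 1), w i = c * (if i = 0 then 1 else η)) ∧ b = 0 := by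
  classical
  set ν : Fin (d + 1) → ℝ := fun i => if i = 0 then 1 else η with hν
  have hνpos : ∀ i, 0 < ν i := by
    intro i
    rw [hν]
    dsimp only
    split <;> [norm_num; exact hη]
  have hμ : (fun i : Fin (d+1) => if i = 0 then 1 + ε else η + ε) = fun i => ν i + ε := by
    funext i
    rw [hν]
    dsimp only
    split <;> ring
  rw [hμ] at hmin
  -- facts about ν
  have hνsum : 0 < ∑ i, (ν i)^2 := by
    have h1 : (ν 0)^2 ≤ ∑ i, (ν i)^2 :=
      Finset.single_le_sum (fun i _ => sq_nonneg (ν i)) (Finset.mem_univ 0)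
    have h2 : 0 < (ν 0)^2 := pow_pos (hνpos 0) 2
    linarith
  set R : ℝ := Real.sqrt (∑ i, (ν i)^2) with hR
  have hRpos : 0 < R := Real.sqrt_pos.mpr hνsum
  have hR2 : R^2 = ∑ i, (ν i)^2 := Real.sq_sqrt hνsum.le
  set astar : ℝ := R / σ with hastar
  have hastarpos : 0 < astar := div_pos hRpos hσ
  -- value of the natural classifier risk
  have hνne : ν ≠ 0 := by
    intro h
    have := congrFun h 0
    simp only [Pi.zero_apply] at this
    exact absurd this (ne_of_gt (hνpos 0))
  have hnat : advRisk d (gmix d (fun i => ν i + ε) σ) ν 0 ε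
      = 1/2 * (gaussianReal 0 1 (Iic (-astar)) + gaussianReal 0 1 (Iic (-astar))) := by
    rw [advRisk_formula d σ ε hσ hε.le _ ν hνne 0]
    have habs : ∑ i, |ν i| = ∑ i, ν i :=
      Finset.sum_congr rfl fun i _ => abs_of_pos (hνpos i)
    have hmν : ∑ i, ν i * (ν i + ε) = ∑ i, (ν i)^2 + ε * ∑ i, ν i := by
      rw [Finset.mul_sum, ← Finset.sum_add_distrib]
      exact Finset.sum_congr rfl fun i _ => by ring
    have hth : (ε * ∑ i, |ν i| - 0 - ∑ i, ν i * (ν i + ε)) / (σ * Real.sqrt (∑ i, (ν i)^2))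
        = -astar := by
      rw [habs, hmν, ← hR, hastar]
      have : ε * ∑ i, ν i - 0 - (∑ i, (ν i)^2 + ε * ∑ i, ν i) = -R^2 := by
        rw [hR2]; ring
      rw [this]
      field_simp
    have hth2 : (ε * ∑ i, |ν i| + 0 - ∑ i, ν i * (ν i + ε)) / (σ * Real.sqrt (∑ i, (ν i)^2))
        = -astar := by
      rw [habs, hmν, ← hR, hastar]
      have : ε * ∑ i, ν i + 0 - (∑ i, (ν i)^2 + ε * ∑ i, ν i) = -R^2 := by
        rw [hR2]; ring
      rw [this]
      field_simp
    rw [hth, hth2]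
  -- rule out w = 0
  have hw : w ≠ 0 := by
    intro h0
    have hle := hmin ν 0
    rw [h0, advRisk_zero d σ ε hε.le, hnat] at hle
    have hlt : 1/2 * (gaussianReal 0 1 (Iic (-astar)) + gaussianReal 0 1 (Iic (-astar)))
        < 1/2 := by
      calc 1/2 * (gaussianReal 0 1 (Iic (-astar)) + gaussianReal 0 1 (Iic (-astar)))
          < 1/2 * 1 := by
            rw [ENNReal.mul_lt_mul_iff_right (by norm_num) (by norm_num)]
            exact Phi_neg_lt_half hastarpos
        _ = 1/2 := mul_one _
    exact absurd (lt_of_le_of_lt hle hlt) (lt_irrefl _)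
  -- main case
  have hwsum : 0 < ∑ i, (w i)^2 := by
    obtain ⟨j, hj⟩ := Function.ne_iff.mp hw
    have h1 : (w j)^2 ≤ ∑ i, (w i)^2 :=
      Finset.single_le_sum (fun i _ => sq_nonneg (w i)) (Finset.mem_univ j)
    have h2 : 0 < (w j)^2 := lt_of_le_of_ne (sq_nonneg _) (Ne.symm (pow_ne_zero 2 hj))
    linarith
  set r : ℝ := Real.sqrt (∑ i, (w i)^2) with hr
  have hrpos : 0 < r := Real.sqrt_pos.mpr hwsum
  have hr2 : r^2 = ∑ i, (w i)^2 := Real.sq_sqrt hwsum.le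
  set s : ℝ := σ * r with hs
  have hspos : 0 < s := mul_pos hσ hrpos
  set A : ℝ := ε * ∑ i, |w i| with hA
  set m : ℝ := ∑ i, w i * (ν i + ε) with hm
  set c : ℝ := (m - A) / s with hc
  set β : ℝ := b / s with hβ
  -- risk formula for w
  have hrisk : advRisk d (gmix d (fun i => ν i + ε) σ) w b ε
      = 1/2 * (gaussianReal 0 1 (Iic (-c - β)) + gaussianReal 0 1 (Iic (-c + β))) := by
    rw [advRisk_formula d σ ε hσ hε.le _ w hw b]
    have e1 : (ε * ∑ i, |w i| - b - ∑ i, w i * (ν i + ε)) / (σ * Real.sqrt (∑ i, (w i)^2))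
        = -c - β := by
      rw [hc, hβ, hs, ← hr, ← hA, ← hm]
      ring
    have e2 : (ε * ∑ i, |w i| + b - ∑ i, w i * (ν i + ε)) / (σ * Real.sqrt (∑ i, (w i)^2))
        = -c + β := by
      rw [hc, hβ, hs, ← hr, ← hA, ← hm]
      ring
    rw [e1, e2]
  -- Cauchy-Schwarz setup
  set Sν : ℝ := ∑ i, w i * ν i with hSν
  have hT : ∑ i, (R * w i - r * ν i)^2 = 2 * R * r * (R * r - Sν) := by
    have hexp : ∀ i : Fin (d+1), (R * w i - r * ν i)^2
        = R^2 * (w i)^2 - 2*R*r*(w i * ν i) + r^2 * (ν i)^2 := fun i => by ring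
    rw [Finset.sum_congr rfl fun i _ => hexp i]
    rw [Finset.sum_add_distrib, Finset.sum_sub_distrib, ← Finset.mul_sum, ← Finset.mul_sum,
      ← Finset.mul_sum, ← hr2, ← hR2, hSν]
    ring
  have hTnonneg : 0 ≤ ∑ i, (R * w i - r * ν i)^2 :=
    Finset.sum_nonneg fun i _ => sq_nonneg _
  have hCS : Sν ≤ R * r := by nlinarith [hT, hTnonneg, mul_pos hRpos hrpos]
  have hD : ∑ i, w i - ∑ i, |w i| ≤ 0 := by
    have : ∑ i, w i ≤ ∑ i, |w i| := Finset.sum_le_sum fun i _ => le_abs_self _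
    linarith
  have hmA : m - A = Sν + ε * (∑ i, w i - ∑ i, |w i|) := by
    rw [hm, hA, hSν]
    have : ∑ i, w i * (ν i + ε) = ∑ i, w i * ν i + ε * ∑ i, w i := by
      rw [Finset.mul_sum, ← Finset.sum_add_distrib]
      exact Finset.sum_congr rfl fun i _ => by ring
    rw [this]
    ring
  have hcle : c ≤ astar := by
    rw [hc, hastar]
    rw [div_le_div_iff₀ hspos hσ]
    have : (m - A) * σ ≤ R * r * σ := by
      apply mul_le_mul_of_nonneg_right _ hσ.le
      rw [hmA]
      nlinarith [hCS, hD, hε]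
    calc (m - A) * σ ≤ R * r * σ := this
      _ = R * (σ * r) := by ring
  -- apply minimality
  have hle := hmin ν 0
  rw [hrisk, hnat] at hle
  have hcancel : gaussianReal 0 1 (Iic (-c - β)) + gaussianReal 0 1 (Iic (-c + β))
      ≤ gaussianReal 0 1 (Iic (-astar)) + gaussianReal 0 1 (Iic (-astar)) := by
    have h2 : (1/2 : ℝ≥0∞) ≠ 0 := by norm_num
    have h3 : (1/2 : ℝ≥0∞) ≠ ⊤ := by norm_num
    exact (ENNReal.mul_le_mul_iff_right h2 h3).mp hle
  have heq : c = astar ∧ β = 0 := by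
    by_contra hne
    exact absurd hcancel (not_le.mpr (key_opt hastarpos hcle hne))
  obtain ⟨hceq, hβeq⟩ := heq
  have hb0 : b = 0 := by
    have h4 : b / s = 0 := by rw [← hβ]; exact hβeq
    rwa [div_eq_iff (ne_of_gt hspos), zero_mul] at h4
  have hmAeq : m - A = R * r := by
    have h1 : (m - A) / s = R / σ := by rw [← hc, hceq, hastar]
    rw [div_eq_div_iff (ne_of_gt hspos) (ne_of_gt hσ)] at h1
    rw [hs] at h1
    have h2 : (m - A) * σ = (R * r) * σ := by rw [h1]; ring
    exact mul_right_cancel₀ (ne_of_gt hσ) h2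
  set D : ℝ := ∑ i, w i - ∑ i, |w i| with hDdef
  have hmA' : m - A = Sν + ε * D := hmA
  have hεD : ε * D = R * r - Sν := by linarith [hmA', hmAeq]
  have hεD1 : 0 ≤ ε * D := by linarith [hCS]
  have hεD2 : ε * D ≤ 0 := mul_nonpos_iff.mpr (Or.inl ⟨hε.le, hD⟩)
  have hDeq : D = 0 := by
    have h5 : ε * D = 0 := le_antisymm hεD2 hεD1
    rcases mul_eq_zero.mp h5 with h6 | h6
    · exact absurd h6 (ne_of_gt hε)
    · exact h6
  have hSeq : Sν = R * r := by
    rw [hDeq, mul_zero] at hεD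
    linarith
  have hTzero : ∑ i, (R * w i - r * ν i)^2 = 0 := by
    rw [hT, hSeq]
    ring
  have hRne : R ≠ 0 := ne_of_gt hRpos
  have hprop : ∀ i : Fin (d+1), w i = (r / R) * ν i := by
    intro i
    have h1 : (R * w i - r * ν i)^2 = 0 :=
      (Finset.sum_eq_zero_iff_of_nonneg (fun i _ => sq_nonneg (R * w i - r * ν i))).mp
        hTzero i (Finset.mem_univ i)
    have h2 : R * w i - r * ν i = 0 := sq_eq_zero_iff.mp h1
    rw [div_mul_eq_mul_div, eq_div_iff hRne]
    linear_combination h2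
  have hc0pos : 0 < r / R := div_pos hrpos hRpos
  refine ⟨fun i => ?_, r / R, hc0pos, fun i => ?_, hb0⟩
  · rw [hprop i]
    exact mul_pos hc0pos (hνpos i)
  · rw [hprop i]
end
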